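/- Let E be a strongly connected graph with finitely many vertices, and let G(E) carry a Hausdorff locally compact non-discrete shift-continuous topology. Then there exists a path v in E such that for every open compact neighborhood U of 0, the set L_v ∩ U is infinite, where L_v = {uv⁻¹ : u ∈ Path(E), r(u) = r(v)} is the L-class of vv⁻¹. -/

import Mathlib

/-- A directed graph: vertices, edges, source and range maps. -/
structure DGraph where
  V : Type
  E : Type
  s : E → V
  r : E → V

namespace DGraph

variable {Q : DGraph}

/-- `pOk Q a l` : the list of edges `l` forms a valid path starting at vertex `a`. -/
def pOk (Q : DGraph) : Q.V → List Q.E → Prop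
  | _, [] => True
  | a, e :: l => Q.s e = a ∧ pOk Q (Q.r e) l

/-- The end vertex of an edge-list starting at `a`. -/
def pRng (Q : DGraph) (a : Q.V) (l : List Q.E) : Q.V :=
  l.foldl (fun _ e => Q.r e) a

theorem pRng_append (a : Q.V) (l₁ l₂ : List Q.E) :
    pRng Q a (l₁ ++ l₂) = pRng Q (pRng Q a l₁) l₂ :=
  List.foldl_append

theorem pOk_append {a : Q.V} {l₁ l₂ : List Q.E} (h₁ : pOk Q a l₁)
    (h₂ : pOk Q (pRng Q a l₁) l₂) : pOk Q a (l₁ ++ l₂) := by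
  induction l₁ generalizing a with
  | nil => exact h₂
  | cons e l ih =>
      obtain ⟨he, hl⟩ := h₁
      exact ⟨he, ih hl h₂⟩

theorem pOk_drop {a : Q.V} {l₁ l₂ : List Q.E} (h : pOk Q a (l₁ ++ l₂)) :
    pOk Q (pRng Q a l₁) l₂ := by
  induction l₁ generalizing a with
  | nil => exact h
  | cons e l ih => exact ih h.2

/-- A (finite, directed) path in the graph `Q`: a start vertex together with a
compatible list of edges.  Paths of length `0` are vertices. -/
structure GPath (Q : DGraph) where
  start : Q.V
  edges : List Q.E
  ok : pOk Q start edges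

/-- The source `s(p)` of a path. -/
def GPath.src (p : GPath Q) : Q.V := p.start

/-- The range `r(p)` of a path. -/
def GPath.rng (p : GPath Q) : Q.V := pRng Q p.start p.edges

/-- The length `|p|` of a path. -/
def GPath.length (p : GPath Q) : ℕ := p.edges.length

/-- The trivial (length zero) path at a vertex `a`. -/
def GPath.triv (Q : DGraph) (a : Q.V) : GPath Q := ⟨a, [], trivial⟩

/-- Concatenation of composable paths. -/
def GPath.comp (p q : GPath Q) (h : p.rng = q.start) : GPath Q :=
  ⟨p.start, p.edges ++ q.edges, pOk_append p.ok (by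
    have hq := q.ok
    rw [← h] at hq
    exact hq)⟩

theorem GPath.comp_rng (p q : GPath Q) (h : p.rng = q.start) :
    (p.comp q h).rng = q.rng := by
  show pRng Q p.start (p.edges ++ q.edges) = q.rng
  rw [pRng_append, show pRng Q p.start p.edges = q.start from h]
  rfl

theorem exists_sub {p q : GPath Q} (h1 : q.start = p.start)
    (h2 : p.edges <+: q.edges) :
    ∃ w : GPath Q, w.start = p.rng ∧ w.rng = q.rng ∧ p.edges ++ w.edges = q.edges := by
  obtain ⟨t, ht⟩ := h2
  have hok : pOk Q p.start (p.edges ++ t) := by rw [ht, ← h1]; exact q.ok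
  refine ⟨⟨p.rng, t, pOk_drop hok⟩, rfl, ?_, ht⟩
  show pRng Q (pRng Q p.start p.edges) t = pRng Q q.start q.edges
  rw [← pRng_append, ht, ← h1]

/-- If the path `q` decomposes as `p·w`, this is the path `w`. -/
noncomputable def subPath (p q : GPath Q) (h1 : q.start = p.start)
    (h2 : p.edges <+: q.edges) : GPath Q :=
  (exists_sub h1 h2).choose

theorem subPath_spec (p q : GPath Q) (h1 : q.start = p.start)
    (h2 : p.edges <+: q.edges) :
    (subPath p q h1 h2).start = p.rng ∧ (subPath p q h1 h2).rng = q.rng ∧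
      p.edges ++ (subPath p q h1 h2).edges = q.edges :=
  (exists_sub h1 h2).choose_spec

/-- The graph inverse semigroup `G(E)` over the graph `Q`: the element `0`
together with the elements `u v⁻¹` where `u, v` are paths with `r(u) = r(v)`. -/
inductive GIS (Q : DGraph) : Type
  | zero : GIS Q
  | elm (u v : GPath Q) (h : u.rng = v.rng) : GIS Q

instance : Zero (GIS Q) := ⟨GIS.zero⟩

-- Multiplication in the graph inverse semigroup:
-- `u₁v₁⁻¹ · u₂v₂⁻¹ = u₁wv₂⁻¹` if `u₂ = v₁w`, `u₁(v₂w)⁻¹` if `v₁ = u₂w`, `0` otherwise.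
open Classical in
noncomputable def GIS.mul : GIS Q → GIS Q → GIS Q
  | .zero, _ => .zero
  | _, .zero => .zero
  | .elm u₁ v₁ h₁, .elm u₂ v₂ h₂ =>
    if hA : u₂.start = v₁.start ∧ v₁.edges <+: u₂.edges then
      GIS.elm (u₁.comp (subPath v₁ u₂ hA.1 hA.2)
          (by rw [(subPath_spec v₁ u₂ hA.1 hA.2).1, h₁]))
        v₂
        (by rw [GPath.comp_rng, (subPath_spec v₁ u₂ hA.1 hA.2).2.1, h₂])
    else if hB : v₁.start = u₂.start ∧ u₂.edges <+: v₁.edges then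
      GIS.elm u₁
        (v₂.comp (subPath u₂ v₁ hB.1 hB.2)
          (by rw [(subPath_spec u₂ v₁ hB.1 hB.2).1, h₂]))
        (by rw [GPath.comp_rng, (subPath_spec u₂ v₁ hB.1 hB.2).2.1, h₁])
    else .zero

noncomputable instance : Mul (GIS Q) := ⟨GIS.mul⟩

/-- The inversion map of the graph inverse semigroup: `(uv⁻¹)⁻¹ = vu⁻¹`, `0⁻¹ = 0`. -/
def GIS.inv : GIS Q → GIS Q
  | .zero => .zero
  | .elm u v h => .elm v u h.symm

/-- The canonical identification of a path `u` with the element `u · r(u)⁻¹` of `G(E)`. -/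
def toGIS (p : GPath Q) : GIS Q := GIS.elm p (GPath.triv Q p.rng) rfl

end DGraph


namespace DGraph
/-- A directed graph is strongly connected if any vertex can be reached from any other. -/
def StrConn (Q : DGraph) : Prop :=
  ∀ a b : Q.V, ∃ p : GPath Q, p.start = a ∧ p.rng = b
end DGraph


namespace DGraph
/-- `L_v`: the Green `L`-class of the idempotent `vv⁻¹`, consisting of all `uv⁻¹`
with `r(u) = r(v)`. -/
def Lcl {Q : DGraph} (v : GPath Q) : Set (GIS Q) :=
  {x | ∃ (u : GPath Q) (h : u.rng = v.rng), x = GIS.elm u v h}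
end DGraph

open DGraph
namespace DGraph

variable {Q : DGraph}

theorem gpath_ext {p q : GPath Q} (h1 : p.start = q.start) (h2 : p.edges = q.edges) :
    p = q := by
  cases p; cases q
  cases h1; cases h2; rfl

theorem elm_congr {u v u' v' : GPath Q} (hu : u = u') (hv : v = v')
    {h : u.rng = v.rng} {h' : u'.rng = v'.rng} :
    GIS.elm u v h = GIS.elm u' v' h' := by
  cases hu; cases hv; rfl

theorem elm_inj {u v u' v' : GPath Q} {h : u.rng = v.rng} {h' : u'.rng = v'.rng}
    (he : GIS.elm u v h = GIS.elm u' v' h') : u = u' ∧ v = v' := by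
  cases he; exact ⟨rfl, rfl⟩

theorem elm_ne_zero {u v : GPath Q} {h : u.rng = v.rng} :
    GIS.elm u v h ≠ (0 : GIS Q) := by
  intro hh
  cases hh

theorem gis_mul_def (x y : GIS Q) : x * y = GIS.mul x y := rfl

theorem gis_mul_zero (x : GIS Q) : x * 0 = 0 := by
  cases x <;> rfl

theorem gis_zero_mul (x : GIS Q) : 0 * x = 0 := by cases x <;> rfl

end DGraph
namespace DGraph

variable {Q : DGraph}

theorem subPath_edges (p q : GPath Q) (h1 : q.start = p.start) (h2 : p.edges <+: q.edges) :
    (subPath p q h1 h2).edges = q.edges.drop p.edges.length := by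
  have hs := (subPath_spec p q h1 h2).2.2
  rw [← hs, List.drop_left]

theorem mul_elm_A {u₁ v₁ u₂ v₂ : GPath Q} (h₁ : u₁.rng = v₁.rng) (h₂ : u₂.rng = v₂.rng)
    (hA : u₂.start = v₁.start ∧ v₁.edges <+: u₂.edges) :
    ∃ (U : GPath Q) (h : U.rng = v₂.rng),
      GIS.elm u₁ v₁ h₁ * GIS.elm u₂ v₂ h₂ = GIS.elm U v₂ h ∧
      U.start = u₁.start ∧ U.edges = u₁.edges ++ u₂.edges.drop v₁.edges.length := by
  have hmul : GIS.elm u₁ v₁ h₁ * GIS.elm u₂ v₂ h₂ =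
      GIS.elm (u₁.comp (subPath v₁ u₂ hA.1 hA.2)
          (by rw [(subPath_spec v₁ u₂ hA.1 hA.2).1, h₁]))
        v₂
        (by rw [GPath.comp_rng, (subPath_spec v₁ u₂ hA.1 hA.2).2.1, h₂]) := by
    show GIS.mul _ _ = _
    simp only [GIS.mul]
    rw [dif_pos hA]
  refine ⟨_, _, hmul, rfl, ?_⟩
  show u₁.edges ++ (subPath v₁ u₂ hA.1 hA.2).edges = _
  rw [subPath_edges]

theorem mul_elm_B {u₁ v₁ u₂ v₂ : GPath Q} (h₁ : u₁.rng = v₁.rng) (h₂ : u₂.rng = v₂.rng)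
    (hnA : ¬(u₂.start = v₁.start ∧ v₁.edges <+: u₂.edges))
    (hB : v₁.start = u₂.start ∧ u₂.edges <+: v₁.edges) :
    ∃ (V : GPath Q) (h : u₁.rng = V.rng),
      GIS.elm u₁ v₁ h₁ * GIS.elm u₂ v₂ h₂ = GIS.elm u₁ V h ∧
      V.start = v₂.start ∧ V.edges = v₂.edges ++ v₁.edges.drop u₂.edges.length := by
  have hmul : GIS.elm u₁ v₁ h₁ * GIS.elm u₂ v₂ h₂ =
      GIS.elm u₁
        (v₂.comp (subPath u₂ v₁ hB.1 hB.2)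
          (by rw [(subPath_spec u₂ v₁ hB.1 hB.2).1, h₂]))
        (by rw [GPath.comp_rng, (subPath_spec u₂ v₁ hB.1 hB.2).2.1, h₁]) := by
    show GIS.mul _ _ = _
    simp only [GIS.mul]
    rw [dif_neg hnA, dif_pos hB]
  refine ⟨_, _, hmul, rfl, ?_⟩
  show v₂.edges ++ (subPath u₂ v₁ hB.1 hB.2).edges = _
  rw [subPath_edges]

theorem mul_elm_zero {u₁ v₁ u₂ v₂ : GPath Q} (h₁ : u₁.rng = v₁.rng) (h₂ : u₂.rng = v₂.rng)
    (hnA : ¬(u₂.start = v₁.start ∧ v₁.edges <+: u₂.edges))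
    (hnB : ¬(v₁.start = u₂.start ∧ u₂.edges <+: v₁.edges)) :
    GIS.elm u₁ v₁ h₁ * GIS.elm u₂ v₂ h₂ = 0 := by
  show GIS.mul _ _ = _
  simp only [GIS.mul]
  rw [dif_neg hnA, dif_neg hnB]
  rfl

end DGraph
namespace DGraph

variable {Q : DGraph}

/-- The pair of edge lists of a nonzero element. -/
def comps : GIS Q → List Q.E × List Q.E
  | .zero => ([], [])
  | .elm p q _ => (p.edges, q.edges)

theorem prefix_list_finite (L : List Q.E) : {l : List Q.E | l <+: L}.Finite := by
  refine Set.Finite.subset (L.inits.finite_toSet) ?_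
  intro l hl
  simpa only [Set.mem_setOf_eq, List.mem_inits] using hl

theorem prefix_set_finite (s₁ s₂ : Q.V) (L₁ L₂ : List Q.E) :
    {y : GIS Q | ∃ (p q : GPath Q) (h : p.rng = q.rng), y = GIS.elm p q h ∧
      p.start = s₁ ∧ q.start = s₂ ∧ p.edges <+: L₁ ∧ q.edges <+: L₂}.Finite := by
  apply Set.Finite.of_finite_image (f := comps)
  · refine Set.Finite.subset (Set.Finite.prod (prefix_list_finite L₁) (prefix_list_finite L₂)) ?_
    rintro x ⟨y, ⟨p, q, h, rfl, hp1, hq1, hp2, hq2⟩, rfl⟩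
    exact ⟨hp2, hq2⟩
  · rintro y ⟨p, q, h, rfl, hp1, hq1, _, _⟩ y' ⟨p', q', h', rfl, hp1', hq1', _, _⟩ he
    simp only [comps, Prod.mk.injEq] at he
    exact elm_congr (gpath_ext (hp1.trans hp1'.symm) he.1) (gpath_ext (hq1.trans hq1'.symm) he.2)

end DGraph
namespace DGraph

variable {Q : DGraph}

theorem cycle_exists (hc : StrConn Q) (f : Q.E) (b : Q.V) :
    ∃ c : GPath Q, c.start = b ∧ c.rng = b ∧ c.edges ≠ [] := by
  obtain ⟨p₁, hp₁s, hp₁r⟩ := hc b (Q.s f)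
  obtain ⟨p₂, hp₂s, hp₂r⟩ := hc (Q.r f) b
  have hpf : pOk Q (Q.s f) [f] := ⟨rfl, trivial⟩
  let pf : GPath Q := ⟨Q.s f, [f], hpf⟩
  have hpfr : pf.rng = Q.r f := rfl
  have h1 : p₁.rng = pf.start := hp₁r
  have h2 : (p₁.comp pf h1).rng = p₂.start := by
    rw [GPath.comp_rng]; rw [hpfr, hp₂s]
  refine ⟨(p₁.comp pf h1).comp p₂ h2, hp₁s, ?_, ?_⟩
  · rw [GPath.comp_rng]; exact hp₂r
  · show (p₁.edges ++ [f]) ++ p₂.edges ≠ []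
    simp

theorem isolated_nonzero [TopologicalSpace (GIS Q)] [T2Space (GIS Q)]
    (hs : ∀ a : GIS Q, Continuous (fun x => a * x) ∧ Continuous (fun x => x * a))
    (hc : StrConn Q) (f₀ : Q.E) (x : GIS Q) (hx : x ≠ 0) : IsOpen {x} := by
  obtain (_ | ⟨u, v, h⟩) := x
  · exact absurd rfl hx
  clear hx
  obtain ⟨c, hcs, hcr, hcne⟩ := cycle_exists hc f₀ u.rng
  have hcu : u.rng = c.start := hcs.symm
  have hcv : v.rng = c.start := by rw [← h]; exact hcs.symm
  set wu : GPath Q := u.comp c hcu with hwu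
  set wv : GPath Q := v.comp c hcv with hwv
  have hwus : wu.start = u.start := rfl
  have hwvs : wv.start = v.start := rfl
  have hwue : wu.edges = u.edges ++ c.edges := rfl
  have hwve : wv.edges = v.edges ++ c.edges := rfl
  have hwur : wu.rng = wv.rng := by
    rw [GPath.comp_rng, GPath.comp_rng]
  set x₁ : GIS Q := GIS.elm wu wv hwur with hx₁
  -- Dl * x = x₁
  have hDlx : GIS.elm wu wu rfl * GIS.elm u v h = x₁ := by
    have hnA : ¬(u.start = wu.start ∧ wu.edges <+: u.edges) := by
      rintro ⟨-, hpre⟩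
      have := hpre.length_le
      rw [hwue, List.length_append] at this
      have : c.edges.length = 0 := by omega
      exact hcne (List.length_eq_zero_iff.mp this)
    have hB : wu.start = u.start ∧ u.edges <+: wu.edges := ⟨rfl, ⟨c.edges, rfl⟩⟩
    obtain ⟨V, hV, hmul, hVs, hVe⟩ := mul_elm_B rfl h hnA hB
    rw [hmul]
    refine elm_congr rfl (gpath_ext ?_ ?_)
    · rw [hVs]; rfl
    · rw [hVe, hwue, hwve, List.drop_left]
  -- x * Dr = x₁
  have hxDr : GIS.elm u v h * GIS.elm wv wv rfl = x₁ := by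
    have hA : wv.start = v.start ∧ v.edges <+: wv.edges := ⟨rfl, ⟨c.edges, rfl⟩⟩
    obtain ⟨U, hU, hmul, hUs, hUe⟩ := mul_elm_A h rfl hA
    rw [hmul]
    refine elm_congr (gpath_ext ?_ ?_) rfl
    · rw [hUs]; rfl
    · rw [hUe, hwve, hwue, List.drop_left]
  -- x ≠ x₁
  have hxne : GIS.elm u v h ≠ x₁ := by
    intro he
    obtain ⟨he1, -⟩ := elm_inj he
    have : u.edges = u.edges ++ c.edges := congrArg GPath.edges he1
    have := congrArg List.length this
    rw [List.length_append] at this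
    exact hcne (List.length_eq_zero_iff.mp (by omega))
  obtain ⟨P, Qo, hP, hQo, hx₁P, hxQ, hdisj⟩ := t2_separation (Ne.symm hxne)
  set P' : Set (GIS Q) := P ∩ {(0 : GIS Q)}ᶜ with hP'def
  have hP' : IsOpen P' := hP.inter (isClosed_singleton.isOpen_compl)
  have hx₁P' : x₁ ∈ P' := ⟨hx₁P, elm_ne_zero⟩
  have h0P' : (0 : GIS Q) ∉ P' := fun h0 => h0.2 rfl
  set S : Set (GIS Q) := {y : GIS Q | ∃ (p q : GPath Q) (hpq : p.rng = q.rng),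
      y = GIS.elm p q hpq ∧ p.start = u.start ∧ q.start = v.start ∧
      p.edges <+: wu.edges ∧ q.edges <+: wv.edges} with hSdef
  have hSfin : S.Finite := prefix_set_finite u.start v.start wu.edges wv.edges
  set O : Set (GIS Q) := Qo ∩ (fun y => GIS.elm wu wu rfl * y)⁻¹' P' ∩
      (fun y => y * GIS.elm wv wv rfl)⁻¹' P' ∩ (S \ {GIS.elm u v h})ᶜ with hOdef
  have hO : IsOpen O := by
    refine IsOpen.inter (IsOpen.inter (IsOpen.inter hQo ?_) ?_) ?_
    · exact (hs _).1.isOpen_preimage P' hP'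
    · exact (hs _).2.isOpen_preimage P' hP'
    · exact ((hSfin.subset Set.diff_subset).isClosed).isOpen_compl
  have hxO : GIS.elm u v h ∈ O := by
    refine ⟨⟨⟨hxQ, ?_⟩, ?_⟩, ?_⟩
    · show GIS.elm wu wu rfl * GIS.elm u v h ∈ P'
      rw [hDlx]; exact hx₁P'
    · show GIS.elm u v h * GIS.elm wv wv rfl ∈ P'
      rw [hxDr]; exact hx₁P'
    · intro hmem
      exact hmem.2 rfl
  have hOsub : O ⊆ {GIS.elm u v h} := by
    rintro y ⟨⟨⟨hyQ, hy1⟩, hy2⟩, hy3⟩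
    obtain (_ | ⟨p, q, hpq⟩) := y
    · have hz : GIS.elm wu wu rfl * (0 : GIS Q) ∈ P' := hy1
      rw [gis_mul_zero] at hz
      exact absurd hz h0P'
    simp only [Set.mem_preimage] at hy1 hy2
    -- left multiplication analysis
    have hpcond : p.start = u.start ∧ p.edges <+: wu.edges := by
      by_cases hA : p.start = wu.start ∧ wu.edges <+: p.edges
      · obtain ⟨U, hU, hmul, hUs, hUe⟩ := mul_elm_A rfl hpq hA
        have hUp : U = p := by
          refine gpath_ext (by rw [hUs]; exact hA.1.symm) ?_
          obtain ⟨t, ht⟩ := hA.2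
          rw [hUe, ← ht, List.drop_left]
        rw [hmul, ] at hy1
        exact absurd (Set.mem_of_mem_inter_left hy1)
          (by
            have : GIS.elm U q (hUp ▸ hpq) ∈ Qo := by rw [show GIS.elm U q _ = GIS.elm p q hpq from elm_congr hUp rfl]; exact hyQ
            exact fun hmem => Set.disjoint_left.mp hdisj hmem this)
      · by_cases hB : wu.start = p.start ∧ p.edges <+: wu.edges
        · exact ⟨hB.1.symm, hB.2⟩
        · rw [mul_elm_zero rfl hpq hA hB] at hy1
          exact absurd hy1 h0P'
    -- right multiplication analysis
    have hqcond : q.start = v.start ∧ q.edges <+: wv.edges := by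
      by_cases hA : wv.start = q.start ∧ q.edges <+: wv.edges
      · exact ⟨hA.1.symm, hA.2⟩
      · by_cases hB : q.start = wv.start ∧ wv.edges <+: q.edges
        · obtain ⟨V, hV, hmul, hVs, hVe⟩ := mul_elm_B hpq rfl hA hB
          have hVq : V = q := by
            refine gpath_ext (by rw [hVs]; exact hB.1.symm) ?_
            obtain ⟨t, ht⟩ := hB.2
            rw [hVe, ← ht, List.drop_left]
          rw [hmul] at hy2
          have hyP : GIS.elm p q hpq ∈ P' := by
            rw [show GIS.elm p q hpq = GIS.elm p V hV from elm_congr rfl hVq.symm]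
            exact hy2
          exact absurd hyP.1 (fun hmem => Set.disjoint_left.mp hdisj hmem hyQ)
        · rw [mul_elm_zero hpq rfl hA hB] at hy2
          exact absurd hy2 h0P'
    have hyS : GIS.elm p q hpq ∈ S :=
      ⟨p, q, hpq, rfl, hpcond.1, hqcond.1, hpcond.2, hqcond.2⟩
    by_contra hne
    exact hy3 ⟨hyS, hne⟩
  have : {GIS.elm u v h} = O := Set.Subset.antisymm (by rintro y rfl; exact hxO) hOsub
  rw [this]
  exact hO

end DGraph
namespace DGraph

variable {Q : DGraph}

theorem gis_finite_of_no_edges (hE : IsEmpty Q.E) (hfin : Finite Q.V) : Finite (GIS Q) := by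
  have hedges : ∀ p : GPath Q, p.edges = [] := by
    intro p
    cases hp : p.edges with
    | nil => rfl
    | cons e _ => exact (hE.false e).elim
  have : Function.Injective (fun x : GIS Q => match x with
      | .zero => (none : Option (Q.V × Q.V))
      | .elm u v _ => some (u.start, v.start)) := by
    intro x y hxy
    cases x with
    | zero => cases y with
      | zero => rfl
      | elm u v h => simp at hxy
    | elm u v h => cases y with
      | zero => simp at hxy
      | elm u' v' h' =>
          simp only [Option.some.injEq, Prod.mk.injEq] at hxy
          exact elm_congr (gpath_ext hxy.1 ((hedges u).trans (hedges u').symm))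
            (gpath_ext hxy.2 ((hedges v).trans (hedges v').symm))
  have hf : Finite (Q.V × Q.V) := Finite.instProd
  have hfo : Finite (Option (Q.V × Q.V)) := Finite.of_injective
    (fun o : Option (Q.V × Q.V) => o.elim (Sum.inl ()) Sum.inr)
    (by rintro (_|a) (_|b) h <;> simp_all)
  exact Finite.of_injective _ ‹Function.Injective _›

theorem compact_isolated_finite {X : Type*} [TopologicalSpace X] {K : Set X}
    (hK : IsCompact K) (h : ∀ x ∈ K, IsOpen ({x} : Set X)) : K.Finite := by
  obtain ⟨t, ht⟩ := hK.elim_finite_subcover (fun i : K => ({i.1} : Set X))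
    (fun i => h i.1 i.2) (fun x hx => Set.mem_iUnion.mpr ⟨⟨x, hx⟩, rfl⟩)
  exact Set.Finite.subset (t.finite_toSet.biUnion fun i _ => Set.finite_singleton i.1) ht

end DGraph
open DGraph

theorem stmt15 (Q : DGraph) (hc : StrConn Q) (hfin : Finite Q.V)
    [TopologicalSpace (GIS Q)] [T2Space (GIS Q)] [LocallyCompactSpace (GIS Q)]
    (hs : ∀ a : GIS Q, Continuous (fun x => a * x) ∧ Continuous (fun x => x * a))
    (hnd : ¬ DiscreteTopology (GIS Q)) :
    ∃ v : GPath Q, ∀ U : Set (GIS Q), IsOpen U → IsCompact U → (0 : GIS Q) ∈ U →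
      (Lcl v ∩ U).Infinite := by
  classical
  -- there is an edge, otherwise the space is finite hence discrete
  by_cases hE : Nonempty Q.E
  swap
  · exfalso
    apply hnd
    have hfinG : Finite (GIS Q) := gis_finite_of_no_edges (not_nonempty_iff.mp hE) hfin
    rw [discreteTopology_iff_isOpen_singleton]
    intro a
    have hcl : IsClosed ({a}ᶜ : Set (GIS Q)) := (Set.toFinite _).isClosed
    simpa using hcl.isOpen_compl
  obtain ⟨f₀⟩ := hE
  have hiso : ∀ x : GIS Q, x ≠ 0 → IsOpen ({x} : Set (GIS Q)) :=
    fun x hx => isolated_nonzero hs hc f₀ x hx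
  -- 0 is not isolated
  have h0niso : ¬ IsOpen ({(0 : GIS Q)} : Set (GIS Q)) := by
    intro h0
    apply hnd
    rw [discreteTopology_iff_isOpen_singleton]
    intro a
    by_cases ha : a = 0
    · subst ha; exact h0
    · exact hiso a ha
  -- every open neighbourhood of 0 is infinite
  have hinf : ∀ W : Set (GIS Q), IsOpen W → (0 : GIS Q) ∈ W → W.Infinite := by
    intro W hW h0W
    by_contra hWf
    rw [Set.not_infinite] at hWf
    apply h0niso
    have h1 : ({(0 : GIS Q)} : Set (GIS Q)) = W ∩ (W \ {0})ᶜ := by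
      ext x
      simp only [Set.mem_singleton_iff, Set.mem_inter_iff, Set.mem_compl_iff, Set.mem_diff,
        not_and, not_not]
      constructor
      · rintro rfl; exact ⟨h0W, fun _ => rfl⟩
      · rintro ⟨hxW, hx⟩; exact hx hxW
    rw [h1]
    exact hW.inter ((hWf.subset Set.diff_subset).isClosed.isOpen_compl)
  -- finite sets of nonzero elements are open
  have hfinopen : ∀ S : Set (GIS Q), S.Finite → (0 : GIS Q) ∉ S → IsOpen S := by
    intro S hSf h0S
    have : S = ⋃ x ∈ S, ({x} : Set (GIS Q)) := (Set.biUnion_of_singleton S).symm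
    rw [this]
    exact isOpen_biUnion fun x hx => hiso x (fun h => h0S (h ▸ hx))
  -- an open compact neighbourhood U₀ of 0
  obtain ⟨K, hKn, -, hKc⟩ := local_compact_nhds (x := (0 : GIS Q)) (n := Set.univ)
    Filter.univ_mem
  set U₀ : Set (GIS Q) := interior K with hU₀def
  have hU₀o : IsOpen U₀ := isOpen_interior
  have h0U₀ : (0 : GIS Q) ∈ U₀ := mem_interior_iff_mem_nhds.mpr hKn
  have hBfin : (K \ U₀).Finite := by
    apply compact_isolated_finite (hKc.inter_right isOpen_interior.isClosed_compl)
    intro x hx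
    exact hiso x (fun h => hx.2 (h ▸ h0U₀))
  have hU₀c : IsCompact U₀ := by
    have h1 : U₀ = K \ (K \ U₀) := by
      ext x
      simp only [Set.mem_diff, not_and, not_not]
      constructor
      · intro hx; exact ⟨interior_subset hx, fun _ => hx⟩
      · rintro ⟨hxK, hx⟩; exact hx hxK
    rw [h1]
    exact hKc.diff (hfinopen _ hBfin (fun h => h.2 h0U₀))
  have hU₀inf : U₀.Infinite := hinf U₀ hU₀o h0U₀
  -- (†)
  have hdag : ∀ U W : Set (GIS Q), IsCompact U → IsOpen W → (0 : GIS Q) ∈ W →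
      (U \ W).Finite := by
    intro U W hUc hWo h0W
    rw [Set.diff_eq]
    apply compact_isolated_finite (hUc.inter_right hWo.isClosed_compl)
    intro x hx
    exact hiso x (fun h => hx.2 (h ▸ h0W))
  -- main combinatorial step
  have hkey : ∃ v : GPath Q, (Lcl v ∩ U₀).Infinite := by
    -- pigeonhole: a start vertex b' with infinitely many elements of U₀
    have hXex : ∃ b : Q.V, {x | x ∈ U₀ ∧ ∃ (u v : GPath Q) (h : u.rng = v.rng),
        x = GIS.elm u v h ∧ u.start = b}.Infinite := by
      by_contra hfin'
      push_neg at hfin'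
      have h1 : (⋃ b : Q.V, {x | x ∈ U₀ ∧ ∃ (u v : GPath Q) (h : u.rng = v.rng),
          x = GIS.elm u v h ∧ u.start = b}).Finite := Set.finite_iUnion hfin'
      have hcover : U₀ \ {0} ⊆ ⋃ b : Q.V, {x | x ∈ U₀ ∧ ∃ (u v : GPath Q)
          (h : u.rng = v.rng), x = GIS.elm u v h ∧ u.start = b} := by
        rintro x ⟨hxU, hx0⟩
        cases x with
        | zero => exact absurd rfl hx0
        | elm u v h => exact Set.mem_iUnion.mpr ⟨u.start, hxU, u, v, h, rfl, rfl⟩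
      exact ((hU₀inf.diff (Set.finite_singleton 0)).mono hcover) h1
    obtain ⟨b', hXinf⟩ := hXex
    obtain ⟨cp, hcps, hcpr, hcpne⟩ := cycle_exists hc f₀ b'
    have hL1 : 0 < cp.edges.length := List.length_pos_iff.mpr hcpne
    have hzh : cp.rng = (GPath.triv Q b').rng := hcpr
    set z : GIS Q := GIS.elm cp (GPath.triv Q b') hzh with hzdef
    set F : GIS Q → GIS Q := fun y => z * y with hFdef
    have hzmul : ∀ (u v : GPath Q) (h : u.rng = v.rng), u.start = b' →
        ∃ (U : GPath Q) (h' : U.rng = v.rng), F (GIS.elm u v h) = GIS.elm U v h' ∧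
          U.start = b' ∧ U.edges = cp.edges ++ u.edges := by
      intro u v h hub
      have hA : u.start = (GPath.triv Q b').start ∧ (GPath.triv Q b').edges <+: u.edges :=
        ⟨hub, List.nil_prefix⟩
      obtain ⟨U, hU, hmul, hUs, hUe⟩ := mul_elm_A hzh h hA
      refine ⟨U, hU, hmul, ?_, ?_⟩
      · rw [hUs]; exact hcps
      · rw [hUe]
        simp [GPath.triv]
    have hAstep : ∀ x ∈ {x : GIS Q | ∃ (u v : GPath Q) (h : u.rng = v.rng),
        x = GIS.elm u v h ∧ u.start = b'}, F x ∈ {x : GIS Q | ∃ (u v : GPath Q)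
        (h : u.rng = v.rng), x = GIS.elm u v h ∧ u.start = b'} := by
      rintro x ⟨u, v, h, rfl, hub⟩
      obtain ⟨U, h', hmul, hUs, -⟩ := hzmul u v h hub
      exact ⟨U, v, h', hmul, hUs⟩
    have hinj1 : ∀ x ∈ {x : GIS Q | ∃ (u v : GPath Q) (h : u.rng = v.rng),
        x = GIS.elm u v h ∧ u.start = b'}, ∀ y ∈ {x : GIS Q | ∃ (u v : GPath Q)
        (h : u.rng = v.rng), x = GIS.elm u v h ∧ u.start = b'}, F x = F y → x = y := by
      rintro x ⟨u, v, h, rfl, hub⟩ y ⟨u', v', h', rfl, hub'⟩ hFeq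
      obtain ⟨U, hU, hmul, hUs, hUe⟩ := hzmul u v h hub
      obtain ⟨U', hU', hmul', hUs', hUe'⟩ := hzmul u' v' h' hub'
      rw [hmul, hmul'] at hFeq
      obtain ⟨hUU, hvv⟩ := elm_inj hFeq
      have he : u.edges = u'.edges := by
        have h2 := congrArg GPath.edges hUU
        rw [hUe, hUe'] at h2
        exact List.append_cancel_left h2
      exact elm_congr (gpath_ext (hub.trans hub'.symm) he) hvv
    have hinjm : ∀ m : ℕ, ∀ x ∈ {x : GIS Q | ∃ (u v : GPath Q) (h : u.rng = v.rng),
        x = GIS.elm u v h ∧ u.start = b'}, ∀ y ∈ {x : GIS Q | ∃ (u v : GPath Q)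
        (h : u.rng = v.rng), x = GIS.elm u v h ∧ u.start = b'},
        F^[m] x = F^[m] y → x = y := by
      intro m
      induction m with
      | zero => intro x _ y _ h; simpa using h
      | succ m ih =>
          intro x hx y hy h
          rw [Function.iterate_succ_apply, Function.iterate_succ_apply] at h
          exact hinj1 x hx y hy (ih (F x) (hAstep x hx) (F y) (hAstep y hy) h)
    have hlen : ∀ (v : GPath Q) (n : ℕ) (u : GPath Q) (h : u.rng = v.rng), u.start = b' →
        ∃ (U : GPath Q) (h' : U.rng = v.rng), F^[n] (GIS.elm u v h) = GIS.elm U v h' ∧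
          U.start = b' ∧ U.edges.length = n * cp.edges.length + u.edges.length := by
      intro v n
      induction n with
      | zero => intro u h hub; exact ⟨u, h, by simp, hub, by simp⟩
      | succ n ih =>
          intro u h hub
          obtain ⟨U₁, h₁, hmul, hU₁s, hU₁e⟩ := hzmul u v h hub
          obtain ⟨U, h', hit, hUs, hUlen⟩ := ih U₁ h₁ hU₁s
          refine ⟨U, h', ?_, hUs, ?_⟩
          · rw [Function.iterate_succ_apply, hmul]; exact hit
          · rw [hUlen, hU₁e, List.length_append]; ring
    have hWo : IsOpen (F ⁻¹' U₀) := (hs z).1.isOpen_preimage U₀ hU₀o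
    have h0W : (0 : GIS Q) ∈ F ⁻¹' U₀ := by
      have : F 0 = 0 := gis_mul_zero z
      show F 0 ∈ U₀
      rw [this]; exact h0U₀
    have hHfin : (U₀ \ F ⁻¹' U₀).Finite := hdag U₀ (F ⁻¹' U₀) hU₀c hWo h0W
    have hsurv : ∃ x₀, (x₀ ∈ U₀ ∧ ∃ (u v : GPath Q) (h : u.rng = v.rng),
        x₀ = GIS.elm u v h ∧ u.start = b') ∧ ∀ n : ℕ, F^[n] x₀ ∈ U₀ := by
      by_contra hno
      push_neg at hno
      have hTfin : ∀ h₀ ∈ U₀ \ F ⁻¹' U₀, {x : GIS Q | (∃ (u v : GPath Q)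
          (h : u.rng = v.rng), x = GIS.elm u v h ∧ u.start = b') ∧
          ∃ m : ℕ, F^[m] x = h₀}.Finite := by
        intro h₀ hh₀
        apply Set.Finite.of_finite_image (f := fun y => (comps y).1.length)
        · refine Set.Finite.subset (Set.finite_Iic ((comps h₀).1.length)) ?_
          rintro n ⟨x, ⟨⟨u, v, h, rfl, hub⟩, m, hm⟩, rfl⟩
          obtain ⟨U, h', hit, -, hUlen⟩ := hlen v m u h hub
          rw [hit] at hm
          have h3 : (comps h₀).1.length = m * cp.edges.length + u.edges.length := by
            rw [← hm]; exact hUlen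
          simp only [Set.mem_Iic]
          show u.edges.length ≤ _
          omega
        · rintro x ⟨⟨u, v, h, rfl, hub⟩, m, hm⟩ y ⟨⟨u', v', h', rfl, hub'⟩, m', hm'⟩ hxy
          obtain ⟨U, hU, hit, -, hUlen⟩ := hlen v m u h hub
          obtain ⟨U', hU', hit', -, hUlen'⟩ := hlen v' m' u' h' hub'
          rw [hit] at hm
          rw [hit'] at hm'
          have hlen₀ : U.edges.length = U'.edges.length := by
            rw [show U.edges = (comps (GIS.elm U v hU)).1 from rfl, hm, ← hm']; rfl
          have hxylen : u.edges.length = u'.edges.length := hxy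
          have hml : m * cp.edges.length = m' * cp.edges.length := by
            rw [hUlen, hUlen'] at hlen₀; omega
          have hmm : m = m' := Nat.eq_of_mul_eq_mul_right hL1 hml
          subst hmm
          exact hinjm m _ ⟨u, v, h, rfl, hub⟩ _ ⟨u', v', h', rfl, hub'⟩ (by rw [hit, hit', hm, hm'])
      have hXsub : {x | x ∈ U₀ ∧ ∃ (u v : GPath Q) (h : u.rng = v.rng),
          x = GIS.elm u v h ∧ u.start = b'} ⊆ ⋃ h₀ ∈ U₀ \ F ⁻¹' U₀,
          {x : GIS Q | (∃ (u v : GPath Q) (h : u.rng = v.rng),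
          x = GIS.elm u v h ∧ u.start = b') ∧ ∃ m : ℕ, F^[m] x = h₀} := by
        intro x hx
        obtain ⟨hxU, u, v, h, hxe, hub⟩ := hx
        obtain ⟨n, hn⟩ := hno x ⟨hxU, u, v, h, hxe, hub⟩
        have hex : ∃ n, F^[n] x ∉ U₀ := ⟨n, hn⟩
        have hNspec := Nat.find_spec hex
        have hNpos : Nat.find hex ≠ 0 := by
          intro h0
          rw [h0] at hNspec
          exact hNspec hxU
        obtain ⟨m, hm⟩ := Nat.exists_eq_succ_of_ne_zero hNpos
        have hmem : F^[m] x ∈ U₀ := by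
          by_contra hnot
          exact Nat.find_min hex (by omega) hnot
        have hstep : F (F^[m] x) ∉ U₀ := by
          have h4 : F^[m.succ] x ∉ U₀ := by rw [← hm]; exact hNspec
          rwa [Function.iterate_succ_apply'] at h4
        refine Set.mem_biUnion (show F^[m] x ∈ U₀ \ F ⁻¹' U₀ from ⟨hmem, hstep⟩) ?_
        exact ⟨⟨u, v, h, hxe, hub⟩, m, rfl⟩
      exact hXinf (Set.Finite.subset (Set.Finite.biUnion hHfin hTfin) hXsub)
    obtain ⟨x₀, ⟨hx₀U, u₀, v₀, h₀, hx₀e, hu₀b⟩, hx₀surv⟩ := hsurv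
    subst hx₀e
    refine ⟨v₀, ?_⟩
    apply Set.infinite_of_injective_forall_mem (f := fun n : ℕ => F^[n] (GIS.elm u₀ v₀ h₀))
    · intro n m hnm
      obtain ⟨U, hU, hit, -, hUlen⟩ := hlen v₀ n u₀ h₀ hu₀b
      obtain ⟨U', hU', hit', -, hUlen'⟩ := hlen v₀ m u₀ h₀ hu₀b
      simp only at hnm
      rw [hit, hit'] at hnm
      have h2 : U.edges.length = U'.edges.length := by
        rw [(elm_inj hnm).1]
      have hml : n * cp.edges.length = m * cp.edges.length := by
        rw [hUlen, hUlen'] at h2; omega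
      exact Nat.eq_of_mul_eq_mul_right hL1 hml
    · intro n
      obtain ⟨U, hU, hit, -, -⟩ := hlen v₀ n u₀ h₀ hu₀b
      refine ⟨?_, hx₀surv n⟩
      rw [hit]
      exact ⟨U, hU, rfl⟩
  obtain ⟨v, hv⟩ := hkey
  refine ⟨v, fun U hUo hUc h0U => ?_⟩
  have h1 : (U₀ \ U).Finite := hdag U₀ U hU₀c hUo h0U
  refine ((hv.diff h1).mono ?_)
  rintro x ⟨⟨hL, hxU₀⟩, hnot⟩
  refine ⟨hL, ?_⟩
  by_contra hxU
  exact hnot ⟨hxU₀, hxU⟩
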